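/- Let F be a field, let r, m be integers with 1 ≤ r < m, and let α₁, …, α_m be distinct elements of F (so m ≤ |F|). Let 𝒞^{RS} = {(P(α₁), …, P(α_m)) : P ∈ F[X], deg P < r} ⊆ F^m be the Reed–Solomon code of dimension r evaluated at these points. Then for every real ε with 0 < ε < 1, every subset S ⊆ 𝒞^{RS} that collides on more than ε·m coordinates satisfies |S| ≥ √(2εm/r). -/

import Mathlib

/-- Theorem 3.1: every subset of a Reed–Solomon code of dimension `r` and length `m`
that collides on more than `ε·m` coordinates has size at least `√(2εm/r)`
(an infinite subset trivially satisfies the bound). -/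
theorem collision_number_of_reed_solomon
    (F : Type) [Field F] (r m : ℕ) (hr : 1 ≤ r) (hrm : r < m)
    (α : Fin m → F) (hα : Function.Injective α)
    (ε : ℝ) (hε0 : 0 < ε) (hε1 : ε < 1)
    (S : Set (Fin m → F))
    (hS : S ⊆ {w : Fin m → F | ∃ P : Polynomial F,
      P.degree < (r : ℕ) ∧ ∀ j, w j = P.eval (α j)})
    (hcol : ε * (m : ℝ) < (({j : Fin m | ∃ x ∈ S, ∃ y ∈ S, x ≠ y ∧ x j = y j}).ncard : ℝ)) :
    S.Infinite ∨ Real.sqrt (2 * ε * (m : ℝ) / (r : ℝ)) ≤ (S.ncard : ℝ) := by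
  by_cases hfin : S.Finite
  swap
  · exact Or.inl hfin
  right
  classical
  set J : Set (Fin m) := {j : Fin m | ∃ x ∈ S, ∃ y ∈ S, x ≠ y ∧ x j = y j} with hJ
  have hJfin : J.Finite := Set.toFinite _
  set T : Finset (Fin m → F) := hfin.toFinset with hT
  set Jf : Finset (Fin m) := hJfin.toFinset with hJf
  set A : Finset ((Fin m → F) × (Fin m → F)) := T.offDiag with hA
  -- key: two distinct codewords agree on at most r - 1 coordinates
  have key : ∀ x ∈ S, ∀ y ∈ S, x ≠ y →
      (Finset.univ.filter (fun j : Fin m => x j = y j)).card ≤ r - 1 := by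
    intro x hx y hy hxy
    obtain ⟨P, hPdeg, hPe⟩ := hS hx
    obtain ⟨Q, hQdeg, hQe⟩ := hS hy
    have hPQ : P - Q ≠ 0 := by
      intro h
      apply hxy
      funext j
      rw [hPe, hQe, sub_eq_zero.mp h]
    have hdeg : (P - Q).degree < (r : ℕ) :=
      (Polynomial.degree_sub_le P Q).trans_lt (max_lt hPdeg hQdeg)
    have hnd : (P - Q).natDegree < r := by
      rwa [← Polynomial.natDegree_lt_iff_degree_lt hPQ] at hdeg
    have hcard : (Finset.univ.filter (fun j : Fin m => x j = y j)).card ≤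
        (P - Q).roots.toFinset.card := by
      apply Finset.card_le_card_of_injOn (fun j => α j)
      · intro j hj
        simp only [Finset.mem_coe, Finset.mem_filter, Finset.mem_univ, true_and] at hj
        rw [Finset.mem_coe, Multiset.mem_toFinset, Polynomial.mem_roots hPQ]
        simp [Polynomial.IsRoot, ← hPe j, ← hQe j, hj]
      · intro a _ b _ h
        exact hα h
    calc (Finset.univ.filter (fun j : Fin m => x j = y j)).card
        ≤ (P - Q).roots.toFinset.card := hcard
      _ ≤ Multiset.card (P - Q).roots := Multiset.toFinset_card_le _
      _ ≤ (P - Q).natDegree := Polynomial.card_roots' _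
      _ ≤ r - 1 := Nat.le_sub_one_of_lt hnd
  -- each collision coordinate is witnessed by at least 2 ordered pairs
  have h1 : ∀ j ∈ Jf, 2 ≤ (A.filter (fun p => p.1 j = p.2 j)).card := by
    intro j hj
    rw [hJf, Set.Finite.mem_toFinset] at hj
    obtain ⟨x, hx, y, hy, hxy, hxyj⟩ := hj
    have hmem : ∀ u ∈ S, ∀ v ∈ S, u ≠ v → u j = v j →
        (u, v) ∈ A.filter (fun p => p.1 j = p.2 j) := by
      intro u hu v hv huv hj'
      simp only [Finset.mem_filter, hA, Finset.mem_offDiag, hT, Set.Finite.mem_toFinset]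
      exact ⟨⟨hu, hv, huv⟩, hj'⟩
    have hsub : ({(x, y), (y, x)} : Finset _) ⊆ A.filter (fun p => p.1 j = p.2 j) := by
      intro p hp
      simp only [Finset.mem_insert, Finset.mem_singleton] at hp
      rcases hp with rfl | rfl
      · exact hmem x hx y hy hxy hxyj
      · exact hmem y hy x hx (Ne.symm hxy) hxyj.symm
    have hc2 : ({(x, y), (y, x)} : Finset ((Fin m → F) × (Fin m → F))).card = 2 := by
      rw [Finset.card_insert_of_notMem (by simp [Prod.ext_iff, hxy]), Finset.card_singleton]
    calc (2 : ℕ) = ({(x, y), (y, x)} : Finset _).card := hc2.symm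
      _ ≤ _ := Finset.card_le_card hsub
  -- double counting
  have hcount : 2 * Jf.card ≤ A.card * (r - 1) := by
    calc 2 * Jf.card = ∑ _j ∈ Jf, 2 := by rw [Finset.sum_const, smul_eq_mul, mul_comm]
      _ ≤ ∑ j ∈ Jf, (A.filter (fun p => p.1 j = p.2 j)).card := Finset.sum_le_sum h1
      _ = ∑ j ∈ Jf, ∑ p ∈ A, (if p.1 j = p.2 j then 1 else 0) := by
          simp only [Finset.card_filter]
      _ = ∑ p ∈ A, ∑ j ∈ Jf, (if p.1 j = p.2 j then 1 else 0) := Finset.sum_comm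
      _ = ∑ p ∈ A, (Jf.filter (fun j => p.1 j = p.2 j)).card := by
          simp only [Finset.card_filter]
      _ ≤ ∑ _p ∈ A, (r - 1) := by
          apply Finset.sum_le_sum
          intro p hp
          rw [hA, Finset.mem_offDiag] at hp
          obtain ⟨hp1, hp2, hp3⟩ := hp
          rw [hT, Set.Finite.mem_toFinset] at hp1 hp2
          calc (Jf.filter (fun j => p.1 j = p.2 j)).card
              ≤ (Finset.univ.filter (fun j : Fin m => p.1 j = p.2 j)).card :=
                Finset.card_le_card (Finset.filter_subset_filter _ (Finset.subset_univ _))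
            _ ≤ r - 1 := key p.1 hp1 p.2 hp2 hp3
      _ = A.card * (r - 1) := by rw [Finset.sum_const, smul_eq_mul]
  have hAcard : A.card ≤ T.card * T.card := by
    rw [hA, Finset.offDiag_card]
    exact Nat.sub_le _ _
  have hnat : 2 * Jf.card ≤ T.card * T.card * r := by
    calc 2 * Jf.card ≤ A.card * (r - 1) := hcount
      _ ≤ (T.card * T.card) * r :=
          Nat.mul_le_mul hAcard (Nat.sub_le r 1)
  -- translate to reals
  have hJc : (J.ncard : ℝ) = (Jf.card : ℝ) := by
    rw [hJf, Set.ncard_eq_toFinset_card J hJfin]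
  have hSc : (S.ncard : ℝ) = (T.card : ℝ) := by
    rw [hT, Set.ncard_eq_toFinset_card S hfin]
  have hr0 : (0 : ℝ) < (r : ℝ) := by exact_mod_cast hr
  have hreal : 2 * ε * (m : ℝ) < (T.card : ℝ) * (T.card : ℝ) * (r : ℝ) := by
    have h2 : 2 * (ε * (m : ℝ)) < 2 * (Jf.card : ℝ) := by linarith [hcol, hJc.symm ▸ hcol]
    have h3 : (2 * Jf.card : ℕ) ≤ (T.card * T.card * r : ℕ) := hnat
    have h4 : ((2 * Jf.card : ℕ) : ℝ) ≤ ((T.card * T.card * r : ℕ) : ℝ) := by exact_mod_cast h3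
    push_cast at h4
    calc 2 * ε * (m : ℝ) = 2 * (ε * (m : ℝ)) := by ring
      _ < 2 * (Jf.card : ℝ) := by
          have := hcol
          rw [hJc] at this
          linarith
      _ ≤ (T.card : ℝ) * (T.card : ℝ) * (r : ℝ) := h4
  have hdiv : 2 * ε * (m : ℝ) / (r : ℝ) ≤ ((T.card : ℝ)) ^ 2 := by
    rw [div_le_iff₀ hr0]
    nlinarith [hreal]
  calc Real.sqrt (2 * ε * (m : ℝ) / (r : ℝ)) ≤ Real.sqrt (((T.card : ℝ)) ^ 2) :=
        Real.sqrt_le_sqrt hdiv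
    _ = (T.card : ℝ) := Real.sqrt_sq (by positivity)
    _ = (S.ncard : ℝ) := hSc.symm
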